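/- Let d ≥ 2, let p ≥ 1 be an integer, K ≥ 0, u ∈ ℝ and U : ℕ^d → ℝ, and assume the error expansion hypothesis: there are functions v_J, one for each nonempty J ⊆ {1,…,d}, assigning a real number to each tuple (i_j)_{j∈J} of nonnegative integers, with |v_J| ≤ K, such that u − U(i) = Σ_{∅≠J} v_J((i_j)_{j∈J}) · Π_{j∈J} 2^{−p i_j} for all i ∈ ℕ^d. Assume in addition that there is v̄ ∈ ℝ such that for every ε > 0 there exists n₀ ∈ ℕ with |v_{{1,…,d}}(i_1,…,i_d) − v̄| ≤ ε whenever i_k ≥ n₀ for all k. With S(n) = Σ_{|i|_1 = n} U(i) and u_n = (δ^{d−1} S)(n) (δ the forward difference operator), one has lim_{n→∞} (d−1)! · 2^{pn} · n^{1−d} · |u − u_n| = |v̄| · ((2^p−1)/2^p)^{d−1}. -/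

import Mathlib

/-- Forward difference operator: `(fdiff F) n = F (n+1) - F n`. -/
def fdiff (F : ℕ → ℝ) : ℕ → ℝ := fun n => F (n + 1) - F n

/-- The finite set of multi-indices `i ∈ ℕ^d` with `|i|₁ = l`. -/
def levelFinset (d l : ℕ) : Finset (Fin d → ℕ) :=
  (Fintype.piFinset fun _ : Fin d => Finset.range (l + 1)).filter (fun i => ∑ k, i k = l)

lemma fdiff_eq : fdiff = fwdDiff 1 := rfl

open Finset in
lemma fdiff_iter (F : ℕ → ℝ) (m n : ℕ) :
    fdiff^[m] F n = ∑ k ∈ range (m+1), (-1:ℝ)^(m-k) * (m.choose k) * F (n+k) := by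
  rw [fdiff_eq, fwdDiff_iter_eq_sum_shift]
  congr 1; ext k
  rw [zsmul_eq_mul, smul_eq_mul, mul_one]
  push_cast
  ring

lemma fdiff_iter_shift (F : ℕ → ℝ) (m n : ℕ) :
    fdiff^[m] (fun l => F (l+1)) n = fdiff^[m] F (n+1) := by
  rw [fdiff_iter, fdiff_iter]
  congr 1; ext k; ring_nf

open Finset in
lemma mem_levelFinset {d l : ℕ} (i : Fin d → ℕ) : i ∈ levelFinset d l ↔ ∑ k, i k = l := by
  constructor
  · intro h; exact (Finset.mem_filter.1 h).2
  · intro h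
    refine Finset.mem_filter.2 ⟨Fintype.mem_piFinset.2 fun k => ?_, h⟩
    rw [Finset.mem_range, Nat.lt_succ_iff, ← h]
    exact Finset.single_le_sum (fun _ _ => Nat.zero_le _) (Finset.mem_univ k)

lemma sum_update_eq {d : ℕ} (i : Fin d → ℕ) (c : Fin d) (v : ℕ) :
    ∑ k, Function.update i c v k = v + ∑ k ∈ Finset.univ.erase c, i k := by
  rw [Finset.sum_update_of_mem (Finset.mem_univ c)]
  congr 1
  rw [Finset.sdiff_singleton_eq_erase]

lemma sum_eq_add_erase {d : ℕ} (i : Fin d → ℕ) (c : Fin d) :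
    ∑ k, i k = i c + ∑ k ∈ Finset.univ.erase c, i k :=
  (Finset.add_sum_erase _ _ (Finset.mem_univ c)).symm

open Finset in
lemma level_sum_step {d : ℕ} (g : (Fin d → ℕ) → ℝ) (B : Finset (Fin d)) (c : Fin d)
    (hc : c ∉ B) (hg : ∀ i, g (Function.update i c (i c + 1)) = g i) (n : ℕ) :
    fdiff (fun l => ∑ i ∈ (levelFinset d l).filter (fun i => ∀ b ∈ B, i b = 0), g i) n
      = ∑ i ∈ (levelFinset d (n+1)).filter (fun i => ∀ b ∈ insert c B, i b = 0), g i := by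
  have hset : (levelFinset d (n+1)).filter (fun i => ∀ b ∈ insert c B, i b = 0)
      = ((levelFinset d (n+1)).filter (fun i => ∀ b ∈ B, i b = 0)).filter (fun i => i c = 0) := by
    rw [Finset.filter_filter]
    apply Finset.filter_congr
    intro i _
    simp only [Finset.forall_mem_insert]
    tauto
  have hbij : ∑ i ∈ ((levelFinset d (n+1)).filter (fun i => ∀ b ∈ B, i b = 0)).filter
        (fun i => ¬ i c = 0), g i
      = ∑ i ∈ (levelFinset d n).filter (fun i => ∀ b ∈ B, i b = 0), g i := by
    refine Finset.sum_nbij' (fun j => Function.update j c (j c - 1))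
      (fun i => Function.update i c (i c + 1)) ?_ ?_ ?_ ?_ ?_
    · intro j hj
      simp only [Finset.mem_filter, mem_levelFinset] at hj ⊢
      obtain ⟨⟨hsum, hB⟩, hc0⟩ := hj
      refine ⟨?_, fun b hb => ?_⟩
      · rw [sum_update_eq]
        rw [sum_eq_add_erase j c] at hsum
        omega
      · rw [Function.update_of_ne (by rintro rfl; exact hc hb)]
        exact hB b hb
    · intro i hi
      simp only [Finset.mem_filter, mem_levelFinset] at hi ⊢
      obtain ⟨hsum, hB⟩ := hi
      refine ⟨⟨?_, fun b hb => ?_⟩, ?_⟩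
      · rw [sum_update_eq]
        rw [sum_eq_add_erase i c] at hsum
        omega
      · rw [Function.update_of_ne (by rintro rfl; exact hc hb)]
        exact hB b hb
      · simp [Function.update_self]
    · intro j hj
      simp only [Finset.mem_filter] at hj
      have : j c ≠ 0 := hj.2
      ext k
      rcases eq_or_ne k c with rfl | hk
      · simp only [Function.update_self]
        omega
      · simp [Function.update_of_ne hk]
    · intro i _
      ext k
      rcases eq_or_ne k c with rfl | hk
      · simp [Function.update_self]
      · simp [Function.update_of_ne hk]
    · intro j hj
      simp only [Finset.mem_filter] at hj
      have : j c ≠ 0 := hj.2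
      rw [← hg (Function.update j c (j c - 1))]
      congr 1
      ext k
      rcases eq_or_ne k c with rfl | hk
      · simp only [Function.update_self]
        omega
      · simp [Function.update_of_ne hk]
  show (∑ i ∈ (levelFinset d (n+1)).filter (fun i => ∀ b ∈ B, i b = 0), g i)
      - (∑ i ∈ (levelFinset d n).filter (fun i => ∀ b ∈ B, i b = 0), g i) = _
  rw [hset, ← Finset.sum_filter_add_sum_filter_not
    ((levelFinset d (n+1)).filter (fun i => ∀ b ∈ B, i b = 0)) (fun i => i c = 0), hbij]
  ring

open Finset in
lemma fdiff_iter_level_sum {d : ℕ} (g : (Fin d → ℕ) → ℝ) (C : Finset (Fin d)) :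
    ∀ (B : Finset (Fin d)), Disjoint C B →
    (∀ c ∈ C, ∀ i, g (Function.update i c (i c + 1)) = g i) → ∀ n,
    fdiff^[C.card] (fun l => ∑ i ∈ (levelFinset d l).filter (fun i => ∀ b ∈ B, i b = 0), g i) n
      = ∑ i ∈ (levelFinset d (n + C.card)).filter (fun i => ∀ b ∈ C ∪ B, i b = 0), g i := by
  induction C using Finset.induction_on with
  | empty =>
    intro B _ _ n
    simp
  | @insert c C hcC IH =>
    intro B hdisj hg n
    have hcB : c ∉ B := fun h =>
      (Finset.disjoint_left.1 hdisj (Finset.mem_insert_self c C)) h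
    have hstep := level_sum_step g B c hcB (hg c (Finset.mem_insert_self c C))
    rw [Finset.card_insert_of_notMem hcC, Function.iterate_succ_apply]
    have : fdiff (fun l => ∑ i ∈ (levelFinset d l).filter (fun i => ∀ b ∈ B, i b = 0), g i)
        = fun l => ∑ i ∈ (levelFinset d (l+1)).filter (fun i => ∀ b ∈ insert c B, i b = 0), g i :=
      funext hstep
    rw [this, fdiff_iter_shift (fun m => ∑ i ∈ (levelFinset d m).filter (fun i => ∀ b ∈ insert c B, i b = 0), g i) C.card n, IH (insert c B)
      (by
        rw [Finset.disjoint_insert_right]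
        constructor
        · exact hcC
        · exact Finset.disjoint_of_subset_left (Finset.subset_insert c C) hdisj)
      (fun c' hc' => hg c' (Finset.mem_insert_of_mem hc'))]
    have h1 : n + 1 + C.card = n + (C.card + 1) := by omega
    have h2 : C ∪ insert c B = insert c C ∪ B := by rw [Finset.union_insert, Finset.insert_union]
    rw [h1, h2]

open Finset in
lemma card_levelFinset : ∀ (d l : ℕ), (levelFinset (d+1) l).card = (l + d).choose d := by
  intro d
  induction d with
  | zero =>
    intro l
    have : levelFinset 1 l = {fun _ => l} := by
      ext i
      rw [mem_levelFinset, Finset.mem_singleton, Fin.sum_univ_one]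
      constructor
      · intro h; funext k; rw [Fin.eq_zero k]; exact h
      · intro h; rw [h]
    rw [this, Finset.card_singleton, Nat.choose_zero_right]
  | succ d IH =>
    intro l
    rw [Finset.card_eq_sum_card_fiberwise (f := fun i => i (Fin.last (d+1)))
      (t := Finset.range (l+1)) (fun i hi => by
        rw [Finset.mem_coe, Finset.mem_range, Nat.lt_succ_iff, ← (mem_levelFinset i).1 (Finset.mem_coe.1 hi)]
        exact Finset.single_le_sum (fun _ _ => Nat.zero_le _) (Finset.mem_univ _))]
    have hfib : ∀ t ∈ Finset.range (l+1),
        ((levelFinset (d+2) l).filter (fun i => i (Fin.last (d+1)) = t)).card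
          = (levelFinset (d+1) (l - t)).card := by
      intro t ht
      rw [Finset.mem_range, Nat.lt_succ_iff] at ht
      refine Finset.card_nbij' (fun i => Fin.init i) (fun w => Fin.snoc w t) ?_ ?_ ?_ ?_
      · intro i hi
        simp only [Finset.mem_filter, mem_levelFinset, Finset.mem_coe] at hi ⊢
        obtain ⟨hsum, hlast⟩ := hi
        rw [Fin.sum_univ_castSucc] at hsum
        have : ∑ k : Fin (d+1), Fin.init i k = ∑ k : Fin (d+1), i k.castSucc := rfl
        rw [this]
        omega
      · intro w hw
        simp only [Finset.mem_coe, Finset.mem_filter, mem_levelFinset] at hw ⊢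
        constructor
        · rw [Fin.sum_univ_castSucc]
          simp only [Fin.snoc_last, Fin.snoc_castSucc]
          rw [hw]
          omega
        · simp
      · intro i hi
        simp only [Finset.mem_coe, Finset.mem_filter] at hi
        rw [← hi.2]
        exact Fin.snoc_init_self i
      · intro w _
        simp
    rw [Finset.sum_congr rfl hfib]
    have : ∀ t ∈ Finset.range (l+1), (levelFinset (d+1) (l-t)).card = (l - t + d).choose d :=
      fun t _ => IH (l - t)
    rw [Finset.sum_congr rfl this]
    have hre : (∑ t ∈ Finset.range (l+1), (l - t + d).choose d)
        = ∑ m ∈ Finset.range (l+1), (m + d).choose d := by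
      rw [← Finset.sum_range_reflect (fun m => (m + d).choose d) (l+1)]
      apply Finset.sum_congr rfl
      intro t ht
      have h : l + 1 - 1 - t = l - t := by omega
      rw [h]
    rw [hre]
    have hic : (∑ m ∈ Finset.range (l+1), (m + d).choose d)
        = ∑ m ∈ Finset.Icc d (l + d), m.choose d := by
      rw [← Finset.Ico_add_one_right_eq_Icc, Finset.sum_Ico_eq_sum_range]
      have h1 : l + d + 1 - d = l + 1 := by omega
      rw [h1]
      apply Finset.sum_congr rfl
      intro m _
      rw [Nat.add_comm d m]
    rw [hic, Nat.sum_Icc_choose, add_assoc]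

open Finset in
lemma card_pi_zero (d l : ℕ) (T : Finset (Fin d)) :
    ((Fintype.piFinset fun _ : Fin d => Finset.range (l + 1)).filter
      (fun z => ∀ c ∈ T, z c = 0)).card = (l+1)^(d - T.card) := by
  have hset : ((Fintype.piFinset fun _ : Fin d => Finset.range (l + 1)).filter
      (fun z => ∀ c ∈ T, z c = 0))
      = Fintype.piFinset (fun k : Fin d => if k ∈ T then ({0} : Finset ℕ)
        else Finset.range (l+1)) := by
    ext z
    simp only [Finset.mem_filter, Fintype.mem_piFinset]
    constructor
    · rintro ⟨h1, h2⟩ k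
      by_cases hk : k ∈ T
      · simp [hk, h2 k hk]
      · simp [hk, h1 k]
    · intro h
      constructor
      · intro k
        rcases (em (k ∈ T)) with hk | hk
        · have := h k; simp [hk] at this; simp [this]
        · have := h k; simpa [hk] using this
      · intro c hc
        have := h c; simpa [hc] using this
  rw [hset, Fintype.card_piFinset]
  have : ∀ k : Fin d, (if k ∈ T then ({0} : Finset ℕ) else Finset.range (l+1)).card
      = if k ∈ T then 1 else (l+1) := by
    intro k; split <;> simp
  rw [Finset.prod_congr rfl (fun k _ => this k), Finset.prod_ite, Finset.prod_const,
    Finset.prod_const, one_pow, one_mul]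
  congr 1
  have : Finset.univ.filter (fun k => ¬ k ∈ T) = Tᶜ := by
    ext k; simp
  rw [this, Finset.card_compl]
  simp

open Finset in
lemma card_level_coord_le (d l : ℕ) (c₀ j₀ : Fin d) (hne : c₀ ≠ j₀) (a : ℕ) :
    ((levelFinset d l).filter (fun i => i c₀ = a)).card ≤ (l+1)^(d - 2) := by
  have htarget := card_pi_zero d l ({c₀, j₀} : Finset (Fin d))
  have hcardT : ({c₀, j₀} : Finset (Fin d)).card = 2 := by
    rw [Finset.card_insert_of_notMem (by simp [hne]), Finset.card_singleton]
  rw [hcardT] at htarget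
  rw [← htarget]
  apply Finset.card_le_card_of_injOn (fun i => Function.update (Function.update i c₀ 0) j₀ 0)
  · intro i hi
    simp only [Finset.mem_coe, Finset.mem_filter, mem_levelFinset] at hi
    obtain ⟨hsum, hc0⟩ := hi
    have hpi : i ∈ (Fintype.piFinset fun _ : Fin d => Finset.range (l + 1)) :=
      (Finset.mem_filter.1 (by exact (mem_levelFinset i).2 hsum : i ∈ levelFinset d l)).1
    simp only [Finset.mem_coe, Finset.mem_filter, Fintype.mem_piFinset] at hpi ⊢
    constructor
    · intro k
      rcases eq_or_ne k j₀ with rfl | hk1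
      · simp
      rcases eq_or_ne k c₀ with rfl | hk2
      · simp [Function.update_of_ne hk1, Finset.mem_range]
      · simp only [Function.update_of_ne hk1, Function.update_of_ne hk2]
        exact hpi k
    · intro c hc
      simp only [Finset.mem_insert, Finset.mem_singleton] at hc
      rcases hc with rfl | rfl
      · rw [Function.update_of_ne hne]; simp
      · simp
  · intro i hi i' hi' heq
    simp only [Finset.coe_filter, Set.mem_setOf_eq, mem_levelFinset] at hi hi'
    have hoff : ∀ k, k ≠ j₀ → i k = i' k := by
      intro k hk
      rcases eq_or_ne k c₀ with rfl | hk2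
      · rw [hi.2, hi'.2]
      · have := congrFun heq k
        simpa [Function.update_of_ne hk, Function.update_of_ne hk2] using this
    funext k
    rcases eq_or_ne k j₀ with rfl | hk
    · have h1 := hi.1
      have h2 := hi'.1
      rw [sum_eq_add_erase i k] at h1
      rw [sum_eq_add_erase i' k] at h2
      have heras : ∑ m ∈ Finset.univ.erase k, i m = ∑ m ∈ Finset.univ.erase k, i' m := by
        apply Finset.sum_congr rfl
        intro m hm
        exact hoff m (Finset.mem_erase.1 hm).1
      rw [heras] at h1
      exact Nat.add_right_cancel (h1.trans h2.symm)
    · exact hoff k hk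

open Finset in
lemma card_level_smallmin_le (d l n₀ : ℕ) (hd : 2 ≤ d) :
    ((levelFinset d l).filter (fun i => ∃ k, i k < n₀)).card ≤ d * n₀ * (l+1)^(d - 2) := by
  classical
  have hsub : (levelFinset d l).filter (fun i => ∃ k, i k < n₀)
      ⊆ Finset.univ.biUnion (fun k : Fin d =>
          (Finset.range n₀).biUnion (fun a => (levelFinset d l).filter (fun i => i k = a))) := by
    intro i hi
    simp only [Finset.mem_filter] at hi
    obtain ⟨hlev, k, hk⟩ := hi
    simp only [Finset.mem_biUnion]
    exact ⟨k, Finset.mem_univ k, i k, Finset.mem_range.2 hk, Finset.mem_filter.2 ⟨hlev, rfl⟩⟩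
  calc ((levelFinset d l).filter (fun i => ∃ k, i k < n₀)).card
      ≤ _ := Finset.card_le_card hsub
    _ ≤ ∑ k : Fin d, ((Finset.range n₀).biUnion
          (fun a => (levelFinset d l).filter (fun i => i k = a))).card :=
        Finset.card_biUnion_le
    _ ≤ ∑ k : Fin d, ∑ a ∈ Finset.range n₀,
          ((levelFinset d l).filter (fun i => i k = a)).card := by
        apply Finset.sum_le_sum
        intro k _
        exact Finset.card_biUnion_le
    _ ≤ ∑ k : Fin d, ∑ a ∈ Finset.range n₀, (l+1)^(d-2) := by
        apply Finset.sum_le_sum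
        intro k _
        apply Finset.sum_le_sum
        intro a _
        obtain ⟨j₀, hj₀⟩ : ∃ j₀ : Fin d, j₀ ≠ k := by
          rcases eq_or_ne k ⟨0, by omega⟩ with rfl | h
          · exact ⟨⟨1, by omega⟩, by simp [Fin.ext_iff]⟩
          · exact ⟨⟨0, by omega⟩, fun hh => h hh.symm⟩
        exact card_level_coord_le d l k j₀ (fun hh => hj₀ hh.symm) a
    _ = d * n₀ * (l+1)^(d - 2) := by
        simp [Finset.sum_const, Finset.card_range, mul_assoc]

open Finset Filter in
lemma fact_mul_choose (r m : ℕ) :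
    r.factorial * (m + r).choose r = ∏ j ∈ Finset.range r, (m + j + 1) := by
  induction r with
  | zero => simp
  | succ r IH =>
    rw [Finset.prod_range_succ, ← IH]
    have h := Nat.add_one_mul_choose_eq (m + r) r
    have : (m + (r+1)).choose (r+1) * (r+1) = (m + r + 1) * (m + r).choose r := by
      simpa [Nat.succ_eq_add_one, Nat.add_assoc] using h.symm
    calc (r+1).factorial * (m + (r+1)).choose (r+1)
        = r.factorial * ((m + (r+1)).choose (r+1) * (r+1)) := by
          rw [Nat.factorial_succ]; ring
      _ = r.factorial * ((m + r + 1) * (m + r).choose r) := by rw [this]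
      _ = r.factorial * (m + r).choose r * (m + r + 1) := by ring

open Filter in
lemma tendsto_add_div (c : ℝ) :
    Filter.Tendsto (fun n : ℕ => ((n:ℝ) + c)/n) Filter.atTop (nhds 1) := by
  have h : Filter.Tendsto (fun n : ℕ => 1 + c * ((n:ℝ))⁻¹) Filter.atTop (nhds (1 + c * 0)) :=
    tendsto_const_nhds.add (tendsto_const_nhds.mul tendsto_inv_atTop_nhds_zero_nat)
  rw [mul_zero, add_zero] at h
  apply h.congr'
  filter_upwards [Filter.eventually_ge_atTop 1] with n hn
  have hn0 : (n:ℝ) ≠ 0 := by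
    have : (0:ℝ) < n := by exact_mod_cast hn
    linarith
  field_simp

open Filter in
lemma tendsto_psi (d k : ℕ) (hd : 2 ≤ d) :
    Filter.Tendsto (fun n : ℕ => (((d-1).factorial : ℝ) * ((n:ℝ)^(d-1))⁻¹)
      * ((levelFinset d (n+k)).card : ℝ)) Filter.atTop (nhds 1) := by
  have hcard : ∀ n : ℕ, (((d-1).factorial : ℝ)) * ((levelFinset d (n+k)).card : ℝ)
      = ∏ j ∈ Finset.range (d-1), ((n:ℝ) + ((k:ℝ) + j + 1)) := by
    intro n
    have hd1 : d = (d-1) + 1 := by omega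
    have h1 : (levelFinset d (n+k)).card = ((n+k) + (d-1)).choose (d-1) := by
      rw [hd1]
      exact card_levelFinset (d-1) (n+k)
    rw [h1]
    rw [← Nat.cast_mul, fact_mul_choose (d-1) (n+k), Nat.cast_prod]
    apply Finset.prod_congr rfl
    intro j _
    push_cast
    ring
  have heq : ∀ n : ℕ, (((d-1).factorial : ℝ) * ((n:ℝ)^(d-1))⁻¹)
      * ((levelFinset d (n+k)).card : ℝ)
      = ∏ j ∈ Finset.range (d-1), (((n:ℝ) + ((k:ℝ) + j + 1)) / n) := by
    intro n
    rw [Finset.prod_div_distrib, Finset.prod_const, Finset.card_range, ← hcard n]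
    ring
  simp only [heq]
  have h1 : Filter.Tendsto (fun n : ℕ =>
      ∏ j ∈ Finset.range (d-1), (((n:ℝ) + ((k:ℝ) + j + 1)) / n)) Filter.atTop
      (nhds (∏ j ∈ Finset.range (d-1), 1)) :=
    tendsto_finset_prod _ (fun j _ => tendsto_add_div _)
  simpa using h1

open Filter in
lemma tendsto_ratio (d : ℕ) (c : ℝ) (hd : 2 ≤ d) :
    Filter.Tendsto (fun n : ℕ => ((n:ℝ)^(d-1))⁻¹ * ((n:ℝ) + c)^(d-2)) Filter.atTop (nhds 0) := by
  have h : Filter.Tendsto (fun n : ℕ => ((n:ℝ))⁻¹ * (((n:ℝ) + c)/n)^(d-2)) Filter.atTop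
      (nhds (0 * 1^(d-2))) :=
    Filter.Tendsto.mul tendsto_inv_atTop_nhds_zero_nat
      (Filter.Tendsto.pow (tendsto_add_div c) (d-2))
  rw [zero_mul] at h
  apply h.congr'
  filter_upwards [Filter.eventually_ge_atTop 1] with n hn
  have hn0 : (n:ℝ) ≠ 0 := by
    have : (0:ℝ) < n := by exact_mod_cast hn
    linarith
  have hd1 : d - 1 = (d-2) + 1 := by omega
  rw [hd1, div_pow, pow_succ]
  field_simp

open Finset Filter

lemma tendsto_proper (d p : ℕ) (hd : 2 ≤ d) (hp : 1 ≤ p) (K : ℝ) (hK : 0 ≤ K)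
    (v : Finset (Fin d) → (Fin d → ℕ) → ℝ)
    (hdep : ∀ (J : Finset (Fin d)) (i i' : Fin d → ℕ),
      (∀ j ∈ J, i j = i' j) → v J i = v J i')
    (hbound : ∀ (J : Finset (Fin d)) (i : Fin d → ℕ), |v J i| ≤ K)
    (J : Finset (Fin d)) (hJne : J.Nonempty) (hJprop : J ≠ Finset.univ) :
    Filter.Tendsto (fun n : ℕ => (Nat.factorial (d - 1) : ℝ) * (2 : ℝ) ^ (p * n) *
      ((n : ℝ) ^ (d - 1))⁻¹ *
      fdiff^[d - 1] (fun l => ∑ i ∈ levelFinset d l,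
        (v J i * ∏ j ∈ J, ((1 : ℝ) / 2) ^ (p * i j))) n)
      Filter.atTop (nhds 0) := by
  classical
  set x : ℝ := ((2:ℝ)^p)⁻¹ with hxdef
  have h2p : (0:ℝ) < 2^p := by positivity
  have hx0 : 0 < x := by positivity
  have hx1 : x ≤ 1 := by
    rw [hxdef]
    rw [inv_le_one_iff₀]
    right
    exact one_le_pow₀ (by norm_num)
  have hhalf : ∀ m : ℕ, ((1:ℝ)/2)^(p * m) = x^m := by
    intro m
    rw [pow_mul, one_div, inv_pow]
  set g : (Fin d → ℕ) → ℝ := fun i => v J i * ∏ j ∈ J, ((1 : ℝ) / 2) ^ (p * i j) with hgdef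
  -- g is constant in directions outside J
  have hgconst : ∀ c ∈ Jᶜ, ∀ i, g (Function.update i c (i c + 1)) = g i := by
    intro c hc i
    rw [Finset.mem_compl] at hc
    have h1 : v J (Function.update i c (i c + 1)) = v J i := by
      apply hdep
      intro j hj
      exact Function.update_of_ne (by rintro rfl; exact hc hj) _ _
    have h2 : ∀ j ∈ J, ((1:ℝ)/2) ^ (p * (Function.update i c (i c + 1)) j)
        = ((1:ℝ)/2) ^ (p * i j) := by
      intro j hj
      rw [Function.update_of_ne (by rintro rfl; exact hc hj)]
    rw [hgdef]
    simp only
    rw [h1, Finset.prod_congr rfl h2]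
  set s := J.card with hsdef
  set t := Jᶜ.card with htdef
  have hs1 : 1 ≤ s := Finset.card_pos.2 hJne
  have hst : s + t = d := by
    rw [hsdef, htdef, Finset.card_add_card_compl, Fintype.card_fin]
  have ht1 : 1 ≤ t := by
    rcases Nat.eq_zero_or_pos t with h0 | h; swap
    · exact h
    exfalso
    apply hJprop
    have h1 : Jᶜ = ∅ := Finset.card_eq_zero.1 h0
    rw [Finset.compl_eq_empty_iff] at h1
    exact h1
  obtain ⟨c₀, hc₀⟩ : ∃ c₀, c₀ ∈ Jᶜ := by
    have : Jᶜ.Nonempty := Finset.card_pos.1 ht1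
    exact this
  obtain ⟨j₀, hj₀⟩ : ∃ j₀ : Fin d, j₀ ≠ c₀ := by
    rcases eq_or_ne c₀ ⟨0, by omega⟩ with rfl | h
    · exact ⟨⟨1, by omega⟩, by simp [Fin.ext_iff]⟩
    · exact ⟨⟨0, by omega⟩, fun hh => h hh.symm⟩
  -- inner iterate
  have hiter := fdiff_iter_level_sum g Jᶜ ∅ (Finset.disjoint_empty_right _)
    hgconst
  have hinner : ∀ m : ℕ, fdiff^[t] (fun l => ∑ i ∈ levelFinset d l, g i) m
      = ∑ i ∈ (levelFinset d (m + t)).filter (fun i => ∀ b ∈ Jᶜ, i b = 0), g i := by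
    intro m
    have h0 : (fun l => ∑ i ∈ (levelFinset d l).filter (fun i => ∀ b ∈ (∅ : Finset (Fin d)), i b = 0), g i)
        = (fun l => ∑ i ∈ levelFinset d l, g i) := by
      funext l
      congr 1
      simp
    have := hiter m
    rw [h0] at this
    rw [this]
    congr 1
    simp
    rfl
  -- bound on inner iterate
  have hbnd : ∀ m : ℕ, |fdiff^[t] (fun l => ∑ i ∈ levelFinset d l, g i) m|
      ≤ K * ((m:ℝ) + (t+1)) ^ (d-2) * x ^ m := by
    intro m
    rw [hinner m]
    have hterm : ∀ i ∈ (levelFinset d (m + t)).filter (fun i => ∀ b ∈ Jᶜ, i b = 0),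
        |g i| ≤ K * x ^ m := by
      intro i hi
      rw [Finset.mem_filter, mem_levelFinset] at hi
      obtain ⟨hsum, hzero⟩ := hi
      have hJsum : ∑ j ∈ J, i j = m + t := by
        have hcompl : ∑ j ∈ Jᶜ, i j = 0 := Finset.sum_eq_zero hzero
        have := Finset.sum_add_sum_compl J (fun j => i j)
        omega
      have hprod : ∏ j ∈ J, ((1:ℝ)/2) ^ (p * i j) = x ^ (m + t) := by
        calc ∏ j ∈ J, ((1:ℝ)/2) ^ (p * i j) = ∏ j ∈ J, x ^ (i j) := by
              apply Finset.prod_congr rfl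
              intro j _
              exact hhalf (i j)
          _ = x ^ (∑ j ∈ J, i j) := Finset.prod_pow_eq_pow_sum J (fun j => i j) x
          _ = x ^ (m + t) := by rw [hJsum]
      rw [hgdef]
      simp only
      rw [abs_mul, hprod, abs_of_pos (pow_pos hx0 _)]
      have h1 : x ^ (m + t) ≤ x ^ m := by
        apply pow_le_pow_of_le_one (le_of_lt hx0) hx1
        omega
      have h2 : |v J i| ≤ K := hbound J i
      calc |v J i| * x ^ (m+t) ≤ K * x ^ (m+t) := by
            apply mul_le_mul_of_nonneg_right h2 (le_of_lt (pow_pos hx0 _))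
        _ ≤ K * x ^ m := by
            apply mul_le_mul_of_nonneg_left h1 hK
    calc |∑ i ∈ (levelFinset d (m + t)).filter (fun i => ∀ b ∈ Jᶜ, i b = 0), g i|
        ≤ ∑ i ∈ (levelFinset d (m + t)).filter (fun i => ∀ b ∈ Jᶜ, i b = 0), |g i| :=
          Finset.abs_sum_le_sum_abs _ _
      _ ≤ ∑ i ∈ (levelFinset d (m + t)).filter (fun i => ∀ b ∈ Jᶜ, i b = 0), K * x ^ m :=
          Finset.sum_le_sum hterm
      _ = ((levelFinset d (m + t)).filter (fun i => ∀ b ∈ Jᶜ, i b = 0)).card * (K * x ^ m) := by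
          rw [Finset.sum_const, nsmul_eq_mul]
      _ ≤ ((m + t + 1 : ℕ) ^ (d-2) : ℝ) * (K * x ^ m) := by
          apply mul_le_mul_of_nonneg_right _ (by positivity)
          have hsub : (levelFinset d (m + t)).filter (fun i => ∀ b ∈ Jᶜ, i b = 0)
              ⊆ (levelFinset d (m + t)).filter (fun i => i c₀ = 0) := by
            apply Finset.monotone_filter_right
            exact fun i _ hi => hi c₀ hc₀
          have hcard := card_level_coord_le d (m + t) c₀ j₀ (fun hh => hj₀ hh.symm) 0
          have := le_trans (Finset.card_le_card hsub) hcard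
          exact_mod_cast this
      _ ≤ K * ((m:ℝ) + (t+1)) ^ (d-2) * x ^ m := by
          have hcast : ((m + t + 1 : ℕ) ^ (d-2) : ℝ) ≤ ((m:ℝ) + (t+1)) ^ (d-2) := by
            push_cast
            apply pow_le_pow_left₀ (by positivity)
            push_cast
            linarith
          calc ((m + t + 1 : ℕ) ^ (d-2) : ℝ) * (K * x ^ m)
              ≤ ((m:ℝ) + (t+1)) ^ (d-2) * (K * x ^ m) := by
                apply mul_le_mul_of_nonneg_right hcast (by positivity)
            _ = K * ((m:ℝ) + (t+1)) ^ (d-2) * x ^ m := by ring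
  -- outer iterate and final bound
  have hd1 : d - 1 = (s - 1) + t := by omega
  set Cst : ℝ := ((d-1).factorial : ℝ) * (2:ℝ)^(s-1) * K with hCdef
  have hCst : 0 ≤ Cst := by positivity
  rw [tendsto_zero_iff_abs_tendsto_zero]
  refine squeeze_zero (g := fun n : ℕ => Cst * (((n:ℝ)^(d-1))⁻¹ * ((n:ℝ) + (2*d+1)) ^ (d-2)))
    (fun n => abs_nonneg _) ?_ ?_
  · intro n
    show |((d-1).factorial : ℝ) * (2:ℝ)^(p*n) * ((n:ℝ)^(d-1))⁻¹
      * fdiff^[d-1] (fun l => ∑ i ∈ levelFinset d l, g i) n| ≤ _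
    rw [abs_mul, abs_mul, abs_mul]
    have hfa : |((d-1).factorial : ℝ)| = ((d-1).factorial : ℝ) := abs_of_pos (by positivity)
    have h2n : |(2:ℝ)^(p*n)| = (2:ℝ)^(p*n) := abs_of_pos (by positivity)
    have hinv : |((n:ℝ)^(d-1))⁻¹| = ((n:ℝ)^(d-1))⁻¹ := abs_of_nonneg (by positivity)
    rw [hfa, h2n, hinv]
    -- rewrite iterate
    have hit : fdiff^[d-1] (fun l => ∑ i ∈ levelFinset d l, g i) n
        = fdiff^[s-1] (fdiff^[t] (fun l => ∑ i ∈ levelFinset d l, g i)) n := by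
      rw [hd1, Function.iterate_add_apply]
    rw [hit, fdiff_iter]
    have habs : |∑ k ∈ Finset.range ((s-1)+1), (-1:ℝ)^((s-1)-k) * (((s-1).choose k : ℕ) : ℝ)
          * fdiff^[t] (fun l => ∑ i ∈ levelFinset d l, g i) (n+k)|
        ≤ ∑ k ∈ Finset.range ((s-1)+1), (((s-1).choose k : ℕ) : ℝ)
          * (K * ((n:ℝ) + (2*d+1)) ^ (d-2) * x ^ (n+k)) := by
      apply le_trans (Finset.abs_sum_le_sum_abs _ _)
      apply Finset.sum_le_sum
      intro k hk
      rw [Finset.mem_range] at hk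
      rw [abs_mul, abs_mul, abs_pow, abs_neg, abs_one, one_pow, one_mul,
        Nat.abs_cast]
      apply mul_le_mul_of_nonneg_left _ (by positivity)
      apply le_trans (hbnd (n+k))
      apply mul_le_mul_of_nonneg_right _ (by positivity)
      apply mul_le_mul_of_nonneg_left _ hK
      apply pow_le_pow_left₀ (by positivity)
      have hkd : (k:ℝ) ≤ d := by
        have : k ≤ d := by omega
        exact_mod_cast this
      have htd : (t:ℝ) ≤ d := by
        have : t ≤ d := by omega
        exact_mod_cast this
      push_cast
      linarith
    apply le_trans (mul_le_mul_of_nonneg_left habs (by positivity))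
    -- now pull constants
    have hxpow : ∀ k : ℕ, (2:ℝ)^(p*n) * x^(n+k) ≤ 1 := by
      intro k
      have hcancel : (2:ℝ)^(p*n) * x^n = 1 := by
        rw [hxdef, pow_mul, ← mul_pow, mul_inv_cancel₀ (ne_of_gt h2p), one_pow]
      rw [pow_add, ← mul_assoc, hcancel, one_mul]
      exact pow_le_one₀ (le_of_lt hx0) hx1
    have hchoose : ∑ k ∈ Finset.range ((s-1)+1), (((s-1).choose k : ℕ) : ℝ) = (2:ℝ)^(s-1) := by
      rw [← Nat.cast_sum, Nat.sum_range_choose]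
      push_cast
      ring
    calc ((d-1).factorial : ℝ) * (2:ℝ)^(p*n) * ((n:ℝ)^(d-1))⁻¹
          * ∑ k ∈ Finset.range ((s-1)+1), (((s-1).choose k : ℕ) : ℝ)
            * (K * ((n:ℝ) + (2*d+1)) ^ (d-2) * x ^ (n+k))
        = ∑ k ∈ Finset.range ((s-1)+1), (((s-1).choose k : ℕ) : ℝ)
            * (((d-1).factorial : ℝ) * K * (((n:ℝ)^(d-1))⁻¹ * ((n:ℝ) + (2*d+1)) ^ (d-2))
              * ((2:ℝ)^(p*n) * x ^ (n+k))) := by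
          rw [Finset.mul_sum]
          apply Finset.sum_congr rfl
          intro k _
          ring
      _ ≤ ∑ k ∈ Finset.range ((s-1)+1), (((s-1).choose k : ℕ) : ℝ)
            * (((d-1).factorial : ℝ) * K * (((n:ℝ)^(d-1))⁻¹ * ((n:ℝ) + (2*d+1)) ^ (d-2)) * 1) := by
          apply Finset.sum_le_sum
          intro k _
          apply mul_le_mul_of_nonneg_left _ (by positivity)
          apply mul_le_mul_of_nonneg_left (hxpow k) (by positivity)
      _ = Cst * (((n:ℝ)^(d-1))⁻¹ * ((n:ℝ) + (2*d+1)) ^ (d-2)) := by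
          rw [← Finset.sum_mul, hchoose, hCdef]
          ring
  · have := (tendsto_ratio d (2*d+1 : ℝ) hd).const_mul Cst
    simpa using this

open Finset Filter

-- E-part: the fluctuation term tends to zero
lemma tendsto_fluct (d k : ℕ) (hd : 2 ≤ d) (K : ℝ) (hK : 0 ≤ K)
    (w : (Fin d → ℕ) → ℝ) (vbar : ℝ)
    (hbound : ∀ i, |w i| ≤ K)
    (hcont : ∀ ε : ℝ, 0 < ε → ∃ n₀ : ℕ, ∀ i : Fin d → ℕ,
      (∀ j, n₀ ≤ i j) → |w i - vbar| ≤ ε) :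
    Filter.Tendsto (fun n : ℕ => ((d-1).factorial : ℝ) * ((n:ℝ)^(d-1))⁻¹ *
      (∑ i ∈ levelFinset d (n+k), (w i - vbar))) Filter.atTop (nhds 0) := by
  classical
  rw [NormedAddCommGroup.tendsto_nhds_zero]
  intro ε hε
  obtain ⟨n₀, hn₀⟩ := hcont (ε/4) (by linarith)
  set M : ℝ := K + |vbar| with hMdef
  have hM : ∀ i, |w i - vbar| ≤ M := fun i =>
    le_trans (abs_sub _ _) (by rw [hMdef]; linarith [hbound i])
  have hM0 : 0 ≤ M := le_trans (abs_nonneg _) (hM (fun _ => 0))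
  set C₂ : ℝ := ((d-1).factorial : ℝ) * (M * (d * n₀)) with hC2def
  have hC2 : 0 ≤ C₂ := by positivity
  have hsmall : Filter.Tendsto (fun n : ℕ =>
      C₂ * (((n:ℝ)^(d-1))⁻¹ * ((n:ℝ) + ((k:ℝ)+1)) ^ (d-2))) Filter.atTop (nhds 0) := by
    have := (tendsto_ratio d ((k:ℝ)+1) hd).const_mul C₂
    simpa using this
  have hev1 := hsmall.eventually_lt_const (show (0:ℝ) < ε/4 by linarith)
  have hev2 := (tendsto_psi d k hd).eventually_lt_const (show (1:ℝ) < 2 by norm_num)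
  filter_upwards [hev1, hev2, Filter.eventually_ge_atTop 1] with n h1 h2 hn1
  rw [Real.norm_eq_abs]
  have hinv0 : (0:ℝ) ≤ ((n:ℝ)^(d-1))⁻¹ := by positivity
  have hfact0 : (0:ℝ) ≤ ((d-1).factorial : ℝ) := by positivity
  -- split the sum
  have hsplit : |∑ i ∈ levelFinset d (n+k), (w i - vbar)|
      ≤ M * (((levelFinset d (n+k)).filter (fun i => ∃ j, i j < n₀)).card : ℝ)
        + (ε/4) * ((levelFinset d (n+k)).card : ℝ) := by
    apply le_trans (Finset.abs_sum_le_sum_abs _ _)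
    rw [← Finset.sum_filter_add_sum_filter_not (levelFinset d (n+k)) (fun i => ∃ j, i j < n₀)]
    apply add_le_add
    · apply le_trans (Finset.sum_le_sum (fun i _ => hM i))
      rw [Finset.sum_const, nsmul_eq_mul]
      rw [mul_comm]
    · apply le_trans (Finset.sum_le_sum (fun i hi => ?_))
      · rw [Finset.sum_const, nsmul_eq_mul, mul_comm]
        apply mul_le_mul_of_nonneg_left _ (by linarith)
        exact_mod_cast Finset.card_le_card (Finset.filter_subset _ _)
      · rw [Finset.mem_filter] at hi
        apply hn₀
        intro j
        by_contra hcon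
        exact hi.2 ⟨j, by omega⟩
  have hcards : (((levelFinset d (n+k)).filter (fun i => ∃ j, i j < n₀)).card : ℝ)
      ≤ (d * n₀ : ℝ) * ((n:ℝ) + ((k:ℝ)+1)) ^ (d-2) := by
    have := card_level_smallmin_le d (n+k) n₀ hd
    have hcast : (((levelFinset d (n+k)).filter (fun i => ∃ j, i j < n₀)).card : ℝ)
        ≤ ((d * n₀ * (n+k+1)^(d-2) : ℕ) : ℝ) := by exact_mod_cast this
    apply le_trans hcast
    push_cast
    apply mul_le_mul_of_nonneg_left _ (by positivity)
    apply pow_le_pow_left₀ (by positivity)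
    linarith
  calc |((d-1).factorial : ℝ) * ((n:ℝ)^(d-1))⁻¹ * (∑ i ∈ levelFinset d (n+k), (w i - vbar))|
      = ((d-1).factorial : ℝ) * ((n:ℝ)^(d-1))⁻¹ * |∑ i ∈ levelFinset d (n+k), (w i - vbar)| := by
        rw [abs_mul, abs_mul, abs_of_nonneg hfact0, abs_of_nonneg hinv0]
    _ ≤ ((d-1).factorial : ℝ) * ((n:ℝ)^(d-1))⁻¹
        * (M * (((levelFinset d (n+k)).filter (fun i => ∃ j, i j < n₀)).card : ℝ)
          + (ε/4) * ((levelFinset d (n+k)).card : ℝ)) := by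
        apply mul_le_mul_of_nonneg_left hsplit (by positivity)
    _ = ((d-1).factorial : ℝ) * ((n:ℝ)^(d-1))⁻¹ * M
          * (((levelFinset d (n+k)).filter (fun i => ∃ j, i j < n₀)).card : ℝ)
        + (ε/4) * (((d-1).factorial : ℝ) * ((n:ℝ)^(d-1))⁻¹ * ((levelFinset d (n+k)).card : ℝ)) := by
        ring
    _ ≤ C₂ * (((n:ℝ)^(d-1))⁻¹ * ((n:ℝ) + ((k:ℝ)+1)) ^ (d-2)) + (ε/4) * 2 := by
        apply add_le_add
        · calc ((d-1).factorial : ℝ) * ((n:ℝ)^(d-1))⁻¹ * M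
              * (((levelFinset d (n+k)).filter (fun i => ∃ j, i j < n₀)).card : ℝ)
              ≤ ((d-1).factorial : ℝ) * ((n:ℝ)^(d-1))⁻¹ * M
                * ((d * n₀ : ℝ) * ((n:ℝ) + ((k:ℝ)+1)) ^ (d-2)) := by
                apply mul_le_mul_of_nonneg_left hcards (by positivity)
            _ = C₂ * (((n:ℝ)^(d-1))⁻¹ * ((n:ℝ) + ((k:ℝ)+1)) ^ (d-2)) := by
                rw [hC2def]; push_cast; ring
        · apply mul_le_mul_of_nonneg_left (le_of_lt h2) (by linarith)
    _ < ε/4 + ε/2 := by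
        apply add_lt_add_of_lt_of_le h1
        linarith
    _ < ε := by linarith

open Finset Filter

lemma tendsto_main (d p : ℕ) (hd : 2 ≤ d) (hp : 1 ≤ p) (K : ℝ) (hK : 0 ≤ K)
    (v : Finset (Fin d) → (Fin d → ℕ) → ℝ) (vbar : ℝ)
    (hbound : ∀ (J : Finset (Fin d)) (i : Fin d → ℕ), |v J i| ≤ K)
    (hcont : ∀ ε : ℝ, 0 < ε → ∃ n₀ : ℕ, ∀ i : Fin d → ℕ,
      (∀ j, n₀ ≤ i j) → |v Finset.univ i - vbar| ≤ ε) :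
    Filter.Tendsto (fun n : ℕ => (Nat.factorial (d - 1) : ℝ) * (2 : ℝ) ^ (p * n) *
      ((n : ℝ) ^ (d - 1))⁻¹ *
      fdiff^[d - 1] (fun l => ∑ i ∈ levelFinset d l,
        (v Finset.univ i * ∏ j ∈ Finset.univ, ((1 : ℝ) / 2) ^ (p * i j))) n)
      Filter.atTop
      (nhds (vbar * (((2:ℝ)^p)⁻¹ - 1)^(d-1))) := by
  classical
  set x : ℝ := ((2:ℝ)^p)⁻¹ with hxdef
  have h2p : (0:ℝ) < 2^p := by positivity
  have hhalf : ∀ m : ℕ, ((1:ℝ)/2)^(p * m) = x^m := by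
    intro m
    rw [pow_mul, one_div, inv_pow]
  set T : ℕ → ℝ := fun l => ∑ i ∈ levelFinset d l, v Finset.univ i with hTdef
  have hS : (fun l => ∑ i ∈ levelFinset d l,
      (v Finset.univ i * ∏ j ∈ Finset.univ, ((1 : ℝ) / 2) ^ (p * i j)))
      = fun l => T l * x ^ l := by
    funext l
    rw [hTdef]
    simp only
    rw [Finset.sum_mul]
    apply Finset.sum_congr rfl
    intro i hi
    congr 1
    calc ∏ j ∈ Finset.univ, ((1:ℝ)/2) ^ (p * i j)
        = ∏ j ∈ Finset.univ, x ^ (i j) := Finset.prod_congr rfl (fun j _ => hhalf (i j))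
      _ = x ^ (∑ j, i j) := Finset.prod_pow_eq_pow_sum Finset.univ (fun j => i j) x
      _ = x ^ l := by rw [(mem_levelFinset i).1 hi]
  rw [hS]
  have hd1 : (d - 1) + 1 = d := by omega
  -- rewrite the scaled iterate as a finite sum
  have heq : ∀ n : ℕ, (Nat.factorial (d - 1) : ℝ) * (2 : ℝ) ^ (p * n) *
      ((n : ℝ) ^ (d - 1))⁻¹ * fdiff^[d - 1] (fun l => T l * x ^ l) n
      = ∑ k ∈ Finset.range d, ((-1:ℝ)^(d-1-k) * ((d-1).choose k : ℝ) * x ^ k)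
          * (((d-1).factorial : ℝ) * ((n:ℝ)^(d-1))⁻¹ * T (n+k)) := by
    intro n
    rw [fdiff_iter, hd1, Finset.mul_sum]
    apply Finset.sum_congr rfl
    intro k _
    have hcancel : (2:ℝ)^(p*n) * x^n = 1 := by
      rw [hxdef, pow_mul, ← mul_pow, mul_inv_cancel₀ (ne_of_gt h2p), one_pow]
    have hxk : (2:ℝ)^(p*n) * x^(n+k) = x^k := by
      rw [pow_add, ← mul_assoc, hcancel, one_mul]
    calc (Nat.factorial (d - 1) : ℝ) * (2 : ℝ) ^ (p * n) * ((n : ℝ) ^ (d - 1))⁻¹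
        * ((-1:ℝ)^(d-1-k) * ((d-1).choose k : ℝ) * (T (n+k) * x ^ (n+k)))
        = ((-1:ℝ)^(d-1-k) * ((d-1).choose k : ℝ) * ((2:ℝ)^(p*n) * x^(n+k)))
          * (((d-1).factorial : ℝ) * ((n:ℝ)^(d-1))⁻¹ * T (n+k)) := by ring
      _ = _ := by rw [hxk]
  simp only [heq]
  -- limit of each piece
  have hTk : ∀ k : ℕ, Filter.Tendsto (fun n : ℕ =>
      ((d-1).factorial : ℝ) * ((n:ℝ)^(d-1))⁻¹ * T (n+k)) Filter.atTop (nhds vbar) := by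
    intro k
    have hTsplit : ∀ n : ℕ, ((d-1).factorial : ℝ) * ((n:ℝ)^(d-1))⁻¹ * T (n+k)
        = vbar * (((d-1).factorial : ℝ) * ((n:ℝ)^(d-1))⁻¹ * ((levelFinset d (n+k)).card : ℝ))
          + ((d-1).factorial : ℝ) * ((n:ℝ)^(d-1))⁻¹
            * (∑ i ∈ levelFinset d (n+k), (v Finset.univ i - vbar)) := by
      intro n
      have : T (n+k) = ((levelFinset d (n+k)).card : ℝ) * vbar
          + ∑ i ∈ levelFinset d (n+k), (v Finset.univ i - vbar) := by
        rw [hTdef]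
        simp only
        rw [Finset.sum_sub_distrib, Finset.sum_const, nsmul_eq_mul]
        ring
      rw [this]
      ring
    simp only [hTsplit]
    have h1 : Filter.Tendsto (fun n : ℕ => vbar * (((d-1).factorial : ℝ) * ((n:ℝ)^(d-1))⁻¹
        * ((levelFinset d (n+k)).card : ℝ))) Filter.atTop (nhds (vbar * 1)) :=
      (tendsto_psi d k hd).const_mul vbar
    have h2 := tendsto_fluct d k hd K hK (v Finset.univ) vbar (hbound Finset.univ) hcont
    have := h1.add h2
    rw [mul_one, add_zero] at this
    exact this
  have hsum : Filter.Tendsto (fun n : ℕ => ∑ k ∈ Finset.range d,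
      ((-1:ℝ)^(d-1-k) * ((d-1).choose k : ℝ) * x ^ k)
        * (((d-1).factorial : ℝ) * ((n:ℝ)^(d-1))⁻¹ * T (n+k))) Filter.atTop
      (nhds (∑ k ∈ Finset.range d, ((-1:ℝ)^(d-1-k) * ((d-1).choose k : ℝ) * x ^ k) * vbar)) :=
    tendsto_finset_sum _ (fun k _ => (hTk k).const_mul _)
  have hfinal : (∑ k ∈ Finset.range d, ((-1:ℝ)^(d-1-k) * ((d-1).choose k : ℝ) * x ^ k) * vbar)
      = vbar * (x - 1)^(d-1) := by
    have hbin := add_pow x (-1 : ℝ) (d-1)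
    rw [show x + (-1) = x - 1 by ring] at hbin
    rw [hd1] at hbin
    rw [hbin, Finset.mul_sum]
    apply Finset.sum_congr rfl
    intro k _
    ring
  rw [hfinal] at hsum
  exact hsum

/-- Exact asymptotics of the combination-technique error (Corollary `exactAsympt`):
`(d-1)! · 2^{pn} · n^{1-d} · |u - u_n| → |v̄| ((2^p - 1)/2^p)^{d-1}`. -/
theorem combination_error_asymptotics (d p : ℕ) (hd : 2 ≤ d) (hp : 1 ≤ p)
    (K : ℝ) (hK : 0 ≤ K) (u : ℝ) (U : (Fin d → ℕ) → ℝ)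
    (v : Finset (Fin d) → (Fin d → ℕ) → ℝ) (vbar : ℝ)
    (hdep : ∀ (J : Finset (Fin d)) (i i' : Fin d → ℕ),
      (∀ j ∈ J, i j = i' j) → v J i = v J i')
    (hbound : ∀ (J : Finset (Fin d)) (i : Fin d → ℕ), |v J i| ≤ K)
    (hexp : ∀ i : Fin d → ℕ,
      u - U i = ∑ J ∈ Finset.univ.filter (fun J : Finset (Fin d) => J.Nonempty),
        v J i * ∏ j ∈ J, ((1 : ℝ) / 2) ^ (p * i j))
    (hcont : ∀ ε : ℝ, 0 < ε → ∃ n₀ : ℕ, ∀ i : Fin d → ℕ,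
      (∀ k, n₀ ≤ i k) → |v Finset.univ i - vbar| ≤ ε) :
    Filter.Tendsto
      (fun n : ℕ => (Nat.factorial (d - 1) : ℝ) * (2 : ℝ) ^ (p * n) *
        ((n : ℝ) ^ (d - 1))⁻¹ *
        |u - fdiff^[d - 1] (fun l => ∑ i ∈ levelFinset d l, U i) n|)
      Filter.atTop
      (nhds (|vbar| * (((2 : ℝ) ^ p - 1) / (2 : ℝ) ^ p) ^ (d - 1))) := by
  classical
  have h2p : (0:ℝ) < 2^p := by positivity
  set 𝒥 : Finset (Finset (Fin d)) := Finset.univ.filter (fun J : Finset (Fin d) => J.Nonempty)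
    with h𝒥
  set j₀ : Fin d := ⟨0, by omega⟩ with hj₀def
  -- Step 1: iterated difference of the constant level sums gives back u
  have hconstiter : ∀ n : ℕ,
      fdiff^[d-1] (fun l => ∑ _i ∈ levelFinset d l, u) n = u := by
    intro n
    have hCcard : (Finset.univ.erase j₀).card = d - 1 := by
      rw [Finset.card_erase_of_mem (Finset.mem_univ _), Finset.card_univ, Fintype.card_fin]
    have hiter := fdiff_iter_level_sum (fun _ : Fin d → ℕ => u) (Finset.univ.erase j₀) ∅
      (Finset.disjoint_empty_right _) (fun c _ i => rfl) n
    rw [hCcard] at hiter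
    have h0 : (fun l => ∑ i ∈ (levelFinset d l).filter
        (fun i => ∀ b ∈ (∅ : Finset (Fin d)), i b = 0), u)
        = (fun l => ∑ _i ∈ levelFinset d l, u) := by
      funext l
      congr 1
      simp
    rw [h0] at hiter
    rw [hiter]
    have hsingle : (levelFinset d (n + (d-1))).filter
        (fun i => ∀ b ∈ Finset.univ.erase j₀ ∪ ∅, i b = 0)
        = {fun k => if k = j₀ then n + (d-1) else 0} := by
      rw [Finset.union_empty]
      ext i
      rw [Finset.mem_filter, mem_levelFinset, Finset.mem_singleton]
      constructor
      · rintro ⟨hsum, hz⟩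
        have hz' : ∀ b, b ≠ j₀ → i b = 0 := fun b hb =>
          hz b (Finset.mem_erase.2 ⟨hb, Finset.mem_univ b⟩)
        funext k
        by_cases hk : k = j₀
        · rw [if_pos hk, hk]
          rw [sum_eq_add_erase i j₀] at hsum
          have : ∑ m ∈ Finset.univ.erase j₀, i m = 0 :=
            Finset.sum_eq_zero (fun b hb => hz' b (Finset.mem_erase.1 hb).1)
          omega
        · rw [if_neg hk]
          exact hz' k hk
      · rintro rfl
        constructor
        · rw [Finset.sum_ite_eq' Finset.univ j₀ (fun _ => n + (d-1))]
          simp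
        · intro b hb
          have hbne := (Finset.mem_erase.1 hb).1
          simp [hbne]
    rw [hsingle, Finset.sum_singleton]
  -- Step 2: decomposition of the error
  have hdecomp : ∀ n : ℕ,
      u - fdiff^[d-1] (fun l => ∑ i ∈ levelFinset d l, U i) n
      = ∑ J ∈ 𝒥, fdiff^[d-1]
          (fun l => ∑ i ∈ levelFinset d l, (v J i * ∏ j ∈ J, ((1:ℝ)/2) ^ (p * i j))) n := by
    intro n
    have h1 : fdiff^[d-1] (fun l => ∑ i ∈ levelFinset d l, (u - U i)) n
        = fdiff^[d-1] (fun l => ∑ _i ∈ levelFinset d l, u) n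
          - fdiff^[d-1] (fun l => ∑ i ∈ levelFinset d l, U i) n := by
      rw [fdiff_iter, fdiff_iter, fdiff_iter, ← Finset.sum_sub_distrib]
      apply Finset.sum_congr rfl
      intro k _
      rw [Finset.sum_sub_distrib]
      ring
    have h2 : (fun l => ∑ i ∈ levelFinset d l, (u - U i))
        = fun l => ∑ J ∈ 𝒥, ∑ i ∈ levelFinset d l,
            (v J i * ∏ j ∈ J, ((1:ℝ)/2) ^ (p * i j)) := by
      funext l
      rw [Finset.sum_comm]
      apply Finset.sum_congr rfl
      intro i _
      exact hexp i
    have h3 : fdiff^[d-1] (fun l => ∑ J ∈ 𝒥, ∑ i ∈ levelFinset d l,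
          (v J i * ∏ j ∈ J, ((1:ℝ)/2) ^ (p * i j))) n
        = ∑ J ∈ 𝒥, fdiff^[d-1]
          (fun l => ∑ i ∈ levelFinset d l, (v J i * ∏ j ∈ J, ((1:ℝ)/2) ^ (p * i j))) n := by
      rw [fdiff_iter]
      have : ∀ k ∈ Finset.range ((d-1)+1),
          (-1:ℝ)^((d-1)-k) * (((d-1).choose k : ℕ) : ℝ)
            * (∑ J ∈ 𝒥, ∑ i ∈ levelFinset d (n+k),
              (v J i * ∏ j ∈ J, ((1:ℝ)/2) ^ (p * i j)))
          = ∑ J ∈ 𝒥, (-1:ℝ)^((d-1)-k) * (((d-1).choose k : ℕ) : ℝ)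
            * ∑ i ∈ levelFinset d (n+k), (v J i * ∏ j ∈ J, ((1:ℝ)/2) ^ (p * i j)) := by
        intro k _
        rw [Finset.mul_sum]
      rw [Finset.sum_congr rfl this, Finset.sum_comm]
      apply Finset.sum_congr rfl
      intro J _
      rw [fdiff_iter]
    have h4 : fdiff^[d-1] (fun l => ∑ i ∈ levelFinset d l, (u - U i)) n
        = u - fdiff^[d-1] (fun l => ∑ i ∈ levelFinset d l, U i) n := by
      rw [h1, hconstiter n]
    rw [← h4, h2, h3]
  -- Step 3: limit of the sum
  set x : ℝ := ((2:ℝ)^p)⁻¹ with hxdef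
  set L : ℝ := vbar * (x - 1)^(d-1) with hLdef
  have huniv𝒥 : Finset.univ ∈ 𝒥 := by
    rw [h𝒥, Finset.mem_filter]
    have : Nonempty (Fin d) := ⟨j₀⟩
    exact ⟨Finset.mem_univ _, Finset.univ_nonempty⟩
  have hG : Filter.Tendsto (fun n : ℕ => (Nat.factorial (d - 1) : ℝ) * (2 : ℝ) ^ (p * n) *
      ((n : ℝ) ^ (d - 1))⁻¹ *
      (u - fdiff^[d - 1] (fun l => ∑ i ∈ levelFinset d l, U i) n))
      Filter.atTop (nhds L) := by
    have heq : ∀ n : ℕ, (Nat.factorial (d - 1) : ℝ) * (2 : ℝ) ^ (p * n) *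
        ((n : ℝ) ^ (d - 1))⁻¹ *
        (u - fdiff^[d - 1] (fun l => ∑ i ∈ levelFinset d l, U i) n)
        = ∑ J ∈ 𝒥, (Nat.factorial (d - 1) : ℝ) * (2 : ℝ) ^ (p * n) *
            ((n : ℝ) ^ (d - 1))⁻¹ * fdiff^[d-1]
            (fun l => ∑ i ∈ levelFinset d l, (v J i * ∏ j ∈ J, ((1:ℝ)/2) ^ (p * i j))) n := by
      intro n
      rw [hdecomp n, Finset.mul_sum]
    simp only [heq]
    have hlim : Filter.Tendsto (fun n : ℕ => ∑ J ∈ 𝒥,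
        (Nat.factorial (d - 1) : ℝ) * (2 : ℝ) ^ (p * n) * ((n : ℝ) ^ (d - 1))⁻¹ * fdiff^[d-1]
          (fun l => ∑ i ∈ levelFinset d l, (v J i * ∏ j ∈ J, ((1:ℝ)/2) ^ (p * i j))) n)
        Filter.atTop (nhds (∑ J ∈ 𝒥, if J = Finset.univ then L else 0)) := by
      apply tendsto_finset_sum
      intro J hJ
      rw [h𝒥, Finset.mem_filter] at hJ
      by_cases hJu : J = Finset.univ
      · subst hJu
        rw [if_pos rfl, hLdef, hxdef]
        exact tendsto_main d p hd hp K hK v vbar hbound hcont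
      · rw [if_neg hJu]
        exact tendsto_proper d p hd hp K hK v hdep hbound J hJ.2 hJu
    have hsum : (∑ J ∈ 𝒥, if J = Finset.univ then L else 0) = L := by
      rw [Finset.sum_ite_eq' 𝒥 Finset.univ (fun _ => L), if_pos huniv𝒥]
    rw [hsum] at hlim
    exact hlim
  -- Step 4: conclude with absolute values
  have habs := hG.abs
  have hLabs : |L| = |vbar| * (((2 : ℝ) ^ p - 1) / (2 : ℝ) ^ p) ^ (d - 1) := by
    rw [hLdef, abs_mul, abs_pow]
    congr 2
    have hx1 : x ≤ 1 := by
      rw [hxdef, inv_le_one_iff₀]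
      right
      exact one_le_pow₀ (by norm_num)
    rw [abs_of_nonpos (by linarith), hxdef]
    rw [sub_div, div_self (ne_of_gt h2p), one_div]
    ring
  rw [hLabs] at habs
  apply habs.congr
  intro n
  rw [abs_mul]
  congr 1
  apply abs_of_nonneg
  positivity
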